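/- Let Z be a measurable space equipped with a finite measure ν, and let η₂ : Z → ℝ be a bounded measurable function with 1 + η₂(u) > 0 for all u ∈ Z and ∫_Z (η₂(u) − ln(1+η₂(u))) ν(du) < ∞. Let A, μ₁, μ₂, β, γ > 0 and σ₂ ∈ ℝ, set C = μ₂ + γ + σ₂²/2 + ∫_Z (η₂(u) − ln(1+η₂(u))) ν(du), and define the threshold 𝒯₀ˢ = (βA/μ₁ − σ₂²/2 − ∫_Z (η₂(u) − ln(1+η₂(u))) ν(du))/(μ₂+γ), so that βA/μ₁ − C = (μ₂+γ)(𝒯₀ˢ − 1). Let S, I, ψ : [0,∞) → ℝ be continuous strictly positive functions with lim_{t→∞} ψ(t)/t = 0, lim_{t→∞} S(t)/t = 0, limsup_{t→∞} (1/t)·ln I(t) ≤ 0, and lim_{t→∞} (1/t)·∫₀ᵗ ψ(s) ds = A/μ₁, and let M : [0,∞) → ℝ satisfy lim_{t→∞} M(t)/t = 0. Suppose that for all t ≥ 0: ∫₀ᵗ βS(s)I(s) ds = (μ₁/β)·( ∫₀ᵗ βψ(s) ds − C·t ) + (ψ(t) − S(t)) − (ψ(0) − S(0)) − (μ₁/β)·ln(I(t)/I(0))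 + M(t). Then liminf_{t→∞} (1/t)·∫₀ᵗ βS(s)I(s) ds ≥ (μ₁(μ₂+γ)/β)·(𝒯₀ˢ − 1); in particular this liminf is strictly positive whenever 𝒯₀ˢ > 1. -/

import Mathlib

open MeasureTheory Filter

set_option maxHeartbeats 1600000

/-- Persistence half of Theorem 3.1 (pathwise skeleton): from the Itô identity for
`∫₀ᵗ β S I`, one gets `liminf (1/t) ∫₀ᵗ β S I ≥ (μ₁(μ₂+γ)/β)(𝒯₀ˢ − 1)`, which is
strictly positive whenever `𝒯₀ˢ > 1`. -/
theorem stmt4 {Z : Type*} [MeasurableSpace Z] (ν : Measure Z) [IsFiniteMeasure ν]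
    (η₂ : Z → ℝ) (hη₂m : Measurable η₂) (hη₂b : ∃ B : ℝ, ∀ u : Z, |η₂ u| ≤ B)
    (hη₂pos : ∀ u : Z, 0 < 1 + η₂ u)
    (hint : Integrable (fun u => η₂ u - Real.log (1 + η₂ u)) ν)
    (A μ₁ μ₂ β γ σ₂ C T : ℝ)
    (hA : 0 < A) (hμ₁ : 0 < μ₁) (hμ₂ : 0 < μ₂) (hβ : 0 < β) (hγ : 0 < γ)
    (hC : C = μ₂ + γ + σ₂ ^ 2 / 2 + ∫ u, (η₂ u - Real.log (1 + η₂ u)) ∂ν)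
    (hTdef : T = (β * A / μ₁ - σ₂ ^ 2 / 2 - ∫ u, (η₂ u - Real.log (1 + η₂ u)) ∂ν) / (μ₂ + γ))
    (S I ψ M : ℝ → ℝ)
    (hSc : ContinuousOn S (Set.Ici (0 : ℝ)))
    (hIc : ContinuousOn I (Set.Ici (0 : ℝ)))
    (hψc : ContinuousOn ψ (Set.Ici (0 : ℝ)))
    (hSpos : ∀ t : ℝ, 0 ≤ t → 0 < S t)
    (hIpos : ∀ t : ℝ, 0 ≤ t → 0 < I t)
    (hψpos : ∀ t : ℝ, 0 ≤ t → 0 < ψ t)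
    (hψsub : Tendsto (fun t => ψ t / t) atTop (nhds 0))
    (hSsub : Tendsto (fun t => S t / t) atTop (nhds 0))
    (hIlog : Filter.limsup (fun t => (1 / t) * Real.log (I t)) atTop ≤ 0)
    (hψavg : Tendsto (fun t => (1 / t) * ∫ s in (0:ℝ)..t, ψ s) atTop (nhds (A / μ₁)))
    (hM : Tendsto (fun t => M t / t) atTop (nhds 0))
    (hid : ∀ t : ℝ, 0 ≤ t →
      (∫ s in (0:ℝ)..t, β * S s * I s) =
        (μ₁ / β) * ((∫ s in (0:ℝ)..t, β * ψ s) - C * t)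
          + (ψ t - S t) - (ψ 0 - S 0) - (μ₁ / β) * Real.log (I t / I 0) + M t) :
    (μ₁ * (μ₂ + γ) / β) * (T - 1) ≤
        Filter.liminf (fun t => (1 / t) * ∫ s in (0:ℝ)..t, β * S s * I s) atTop ∧
      (1 < T →
        0 < Filter.liminf (fun t => (1 / t) * ∫ s in (0:ℝ)..t, β * S s * I s) atTop) := by
  have hμγ : (0:ℝ) < μ₂ + γ := by linarith
  set c : ℝ := μ₁ / β with hc
  have hcpos : 0 < c := div_pos hμ₁ hβ
  set L : ℝ := (μ₁ * (μ₂ + γ) / β) * (T - 1) with hLdef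
  set f : ℝ → ℝ := fun t => (1 / t) * ∫ s in (0:ℝ)..t, β * S s * I s with hfdef
  -- the limit value identity
  have hLeq : L = c * (β * (A / μ₁) - C) := by
    rw [hLdef, hc, hTdef, hC]
    field_simp
    ring
  -- continuity and integrability facts
  have hSIcont : ContinuousOn (fun s => β * S s * I s) (Set.Ici (0:ℝ)) :=
    (continuousOn_const.mul hSc).mul hIc
  have hSIint : ∀ a b : ℝ, 0 ≤ a → 0 ≤ b →
      IntervalIntegrable (fun s => β * S s * I s) volume a b := by
    intro a b ha hb
    refine (hSIcont.mono ?_).intervalIntegrable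
    intro x hx
    rcases Set.mem_uIcc.mp hx with h | h
    · exact le_trans ha h.1
    · exact le_trans hb h.1
  have hFnonneg : ∀ t : ℝ, 0 ≤ t → 0 ≤ ∫ s in (0:ℝ)..t, β * S s * I s := by
    intro t ht
    refine intervalIntegral.integral_nonneg ht ?_
    intro s hs
    exact mul_nonneg (mul_nonneg hβ.le (hSpos s hs.1).le) (hIpos s hs.1).le
  -- the drift part
  set g : ℝ → ℝ := fun t =>
    c * ((1 / t) * (∫ s in (0:ℝ)..t, β * ψ s) - C) + ψ t / t - S t / t
      - (ψ 0 - S 0) / t + c * Real.log (I 0) / t + M t / t with hgdef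
  have hgL : Tendsto g atTop (nhds L) := by
    have h1 : Tendsto (fun t => c * ((1 / t) * (∫ s in (0:ℝ)..t, β * ψ s) - C)) atTop
        (nhds (c * (β * (A / μ₁) - C))) := by
      refine Tendsto.congr (fun t => ?_)
        (((hψavg.const_mul β).sub tendsto_const_nhds).const_mul c)
      rw [intervalIntegral.integral_const_mul]
      ring
    have h4 : Tendsto (fun t : ℝ => (ψ 0 - S 0) / t) atTop (nhds 0) :=
      tendsto_const_nhds.div_atTop tendsto_id
    have h5 : Tendsto (fun t : ℝ => c * Real.log (I 0) / t) atTop (nhds 0) :=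
      tendsto_const_nhds.div_atTop tendsto_id
    have hcomb := ((((h1.add hψsub).sub hSsub).sub h4).add h5).add hM
    rw [hgdef]
    convert hcomb using 2
    rw [hLeq]
    ring
  -- pathwise decomposition for t > 0
  have hdecomp : ∀ t : ℝ, 0 < t → f t = g t - c * ((1 / t) * Real.log (I t)) := by
    intro t ht
    have hIne : I t ≠ 0 := (hIpos t ht.le).ne'
    have hI0ne : I 0 ≠ 0 := (hIpos 0 le_rfl).ne'
    have hid' := hid t ht.le
    rw [Real.log_div hIne hI0ne] at hid'
    show (1 / t) * (∫ s in (0:ℝ)..t, β * S s * I s) = _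
    rw [hid', hgdef]
    field_simp
    ring
  -- f is frequently bounded above
  have hfreq : ∃ b : ℝ, ∃ᶠ t in atTop, f t ≤ b := by
    by_contra hcon
    push_neg at hcon
    -- then I decays eventually like exp(-t)
    have hIe : ∀ᶠ t in atTop, I t ≤ Real.exp (-t) := by
      filter_upwards [hgL.eventually_lt_const (lt_add_one L), hcon (L + 1 + c),
        eventually_gt_atTop (0:ℝ)] with t h1 h2 h3
      have hd := hdecomp t h3
      have h4 : c * ((1 / t) * Real.log (I t)) ≤ -c := by
        have : c * ((1 / t) * Real.log (I t)) = g t - f t := by linarith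
        rw [this]; linarith
      have h5 : (1 / t) * Real.log (I t) ≤ -1 := by
        nlinarith
      have h6 : Real.log (I t) ≤ -t := by
        have heq : Real.log (I t) = t * ((1 / t) * Real.log (I t)) := by
          field_simp
        rw [heq]
        calc t * ((1 / t) * Real.log (I t)) ≤ t * (-1) :=
          mul_le_mul_of_nonneg_left h5 h3.le
        _ = -t := by ring
      exact (Real.log_le_iff_le_exp (hIpos t h3.le)).mp h6
    have hSe : ∀ᶠ t in atTop, S t ≤ t := by
      filter_upwards [hSsub.eventually_lt_const (by norm_num : (0:ℝ) < 1),
        eventually_gt_atTop (0:ℝ)] with t h1 h2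
      exact ((div_lt_one h2).mp h1).le
    obtain ⟨T₀, hT₀⟩ := eventually_atTop.mp (hIe.and hSe)
    set T₁ : ℝ := max T₀ 1 with hT₁def
    have hT₁1 : (1:ℝ) ≤ T₁ := le_max_right _ _
    have hT₁0 : (0:ℝ) ≤ T₁ := le_trans zero_le_one hT₁1
    have key : ∀ t : ℝ, T₁ ≤ t →
        (∫ s in (0:ℝ)..t, β * S s * I s) ≤ (∫ s in (0:ℝ)..T₁, β * S s * I s) + 4 * β := by
      intro t ht
      have ht0 : (0:ℝ) ≤ t := le_trans hT₁0 ht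
      have hsplit := intervalIntegral.integral_add_adjacent_intervals
        (hSIint 0 T₁ le_rfl hT₁0) (hSIint T₁ t hT₁0 ht0)
      have hcont2 : Continuous (fun s : ℝ => 2 * β * Real.exp (-s / 2)) :=
        continuous_const.mul (Real.continuous_exp.comp (continuous_id.neg.div_const 2))
      have hmono : (∫ s in T₁..t, β * S s * I s)
          ≤ ∫ s in T₁..t, 2 * β * Real.exp (-s / 2) := by
        refine intervalIntegral.integral_mono_on ht (hSIint T₁ t hT₁0 ht0)
          (hcont2.intervalIntegrable _ _) ?_
        intro s hs
        have hs1 : (1:ℝ) ≤ s := le_trans hT₁1 hs.1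
        have hsp : (0:ℝ) ≤ s := by linarith
        obtain ⟨hIs, hSs⟩ := hT₀ s (le_trans (le_max_left _ _) hs.1)
        have e1 : β * S s * I s ≤ β * s * I s := by
          have h := mul_le_mul_of_nonneg_right hSs (hIpos s hsp).le
          have h' := mul_le_mul_of_nonneg_left h hβ.le
          calc β * S s * I s = β * (S s * I s) := by ring
          _ ≤ β * (s * I s) := h'
          _ = β * s * I s := by ring
        have e1b : β * s * I s ≤ β * s * Real.exp (-s) :=
          mul_le_mul_of_nonneg_left hIs (by positivity)
        have e2 : s ≤ 2 * Real.exp (s / 2) := by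
          nlinarith [Real.add_one_le_exp (s / 2)]
        have e3 : β * s * Real.exp (-s) ≤ 2 * β * Real.exp (-s / 2) := by
          have h2 : β * s ≤ β * (2 * Real.exp (s / 2)) :=
            mul_le_mul_of_nonneg_left e2 hβ.le
          have h3 := mul_le_mul_of_nonneg_right h2 (Real.exp_pos (-s)).le
          have h4 : Real.exp (s / 2) * Real.exp (-s) = Real.exp (-s / 2) := by
            rw [← Real.exp_add]; ring_nf
          calc β * s * Real.exp (-s) ≤ β * (2 * Real.exp (s / 2)) * Real.exp (-s) := h3
          _ = 2 * β * (Real.exp (s / 2) * Real.exp (-s)) := by ring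
          _ = 2 * β * Real.exp (-s / 2) := by rw [h4]
        linarith
      have hcalc : (∫ s in T₁..t, 2 * β * Real.exp (-s / 2)) ≤ 4 * β := by
        have hderiv : ∀ s ∈ Set.uIcc T₁ t,
            HasDerivAt (fun x : ℝ => -4 * β * Real.exp (-x / 2))
              (2 * β * Real.exp (-s / 2)) s := by
          intro s _
          have h1 : HasDerivAt (fun x : ℝ => -x / 2) (-1 / 2) s := by
            simpa using (hasDerivAt_id s).neg.div_const 2
          have h3 := (h1.exp).const_mul (-4 * β)
          rw [show 2 * β * Real.exp (-s / 2) = -4 * β * (Real.exp (-s / 2) * (-1 / 2)) by ring]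
          exact h3
        rw [intervalIntegral.integral_eq_sub_of_hasDerivAt hderiv
          (hcont2.intervalIntegrable _ _)]
        have hb1 : Real.exp (-T₁ / 2) ≤ 1 := by
          rw [Real.exp_le_one_iff]; linarith
        have hb2 : 0 < Real.exp (-t / 2) := Real.exp_pos _
        nlinarith
      linarith [hsplit]
    -- contradiction with f → ∞
    set B : ℝ := (∫ s in (0:ℝ)..T₁, β * S s * I s) + 4 * β with hBdef
    obtain ⟨t, ht1, ht2⟩ := ((hcon B).and (eventually_ge_atTop (max T₁ 1))).exists
    have htT₁ : T₁ ≤ t := le_trans (le_max_left _ _) ht2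
    have ht1' : (1:ℝ) ≤ t := le_trans (le_max_right _ _) ht2
    have ht0 : (0:ℝ) < t := lt_of_lt_of_le one_pos ht1'
    have hft : f t ≤ B := by
      have h1 : f t ≤ ∫ s in (0:ℝ)..t, β * S s * I s := by
        have h2 : (1 / t : ℝ) ≤ 1 := by
          rw [div_le_one ht0]; exact ht1'
        calc f t = (1 / t) * ∫ s in (0:ℝ)..t, β * S s * I s := rfl
        _ ≤ 1 * ∫ s in (0:ℝ)..t, β * S s * I s :=
          mul_le_mul_of_nonneg_right h2 (hFnonneg t ht0.le)
        _ = ∫ s in (0:ℝ)..t, β * S s * I s := one_mul _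
      exact le_trans h1 (key t htT₁)
    exact absurd hft (not_le.mpr ht1)
  obtain ⟨b, hb⟩ := hfreq
  have hcob : IsCoboundedUnder (· ≥ ·) atTop f := IsCoboundedUnder.of_frequently_le hb
  -- the log term is eventually bounded above
  have hbdd : IsBoundedUnder (· ≤ ·) atTop (fun t => (1 / t) * Real.log (I t)) := by
    refine ⟨(L + 1) / c, ?_⟩
    rw [Filter.eventually_map]
    filter_upwards [hgL.eventually_lt_const (lt_add_one L), eventually_gt_atTop (0:ℝ)]
      with t h1 h2
    have hd := hdecomp t h2
    have hfnn : 0 ≤ f t := mul_nonneg (one_div_nonneg.mpr h2.le) (hFnonneg t h2.le)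
    have h3 : c * ((1 / t) * Real.log (I t)) ≤ L + 1 := by
      have : c * ((1 / t) * Real.log (I t)) = g t - f t := by linarith
      rw [this]; linarith
    rw [le_div_iff₀ hcpos]
    linarith [mul_comm c ((1 / t) * Real.log (I t))]
  -- the main liminf bound
  have hmain : L ≤ liminf f atTop := by
    apply le_of_forall_sub_le
    intro ε hε
    refine le_liminf_of_le hcob ?_
    have hεc : (0:ℝ) < ε / (2 * c) := by positivity
    have hlog_ev : ∀ᶠ t in atTop, (1 / t) * Real.log (I t) < ε / (2 * c) :=
      eventually_lt_of_limsup_lt (lt_of_le_of_lt hIlog hεc) hbdd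
    filter_upwards [hlog_ev, hgL.eventually_const_lt (by linarith : L - ε / 2 < L),
      eventually_gt_atTop (0:ℝ)] with t h1 h2 h3
    have hd := hdecomp t h3
    have h4 : c * ((1 / t) * Real.log (I t)) ≤ c * (ε / (2 * c)) :=
      mul_le_mul_of_nonneg_left h1.le hcpos.le
    have h5 : c * (ε / (2 * c)) = ε / 2 := by
      field_simp
    linarith
  refine ⟨hmain, fun hT => ?_⟩
  have hLpos : 0 < L := by
    rw [hLdef]
    apply mul_pos (by positivity)
    linarith
  exact lt_of_lt_of_le hLpos hmain
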